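/- For every n ∈ ℕ define P'^(n,1) := diag(u^(n,1)) K^(1) diag(1/u^(n+1,2)) and P'^(n,2) := diag(u^(n+1,2)) K^(2) diag(u^(n,3)). Then: (i) (P'^(n,1))ᵀ1_{m1} = P'^(n,2)1_{m3}; (ii) P'^(n,1)1_{m2} = P^(n,1) r_n and (P'^(n,2))ᵀ1_{m2} = (P^(n,2))ᵀ(1/r_n), where r_n := ((P^(n,2)1_{m3}) / ((P^(n,1))ᵀ1_{m1}))^{1/2} (quotient and square root entrywise); and (iii) the sums of all entries of P'^(n,1) and of P'^(n,2) are each at most 1. -/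

import Mathlib

open Matrix Finset Real

noncomputable section

/-- The Hilbert projective (pseudo)metric on the positive orthant:
`d_H(u,v) = log((max_i u_i/v_i) · (max_j v_j/u_j))`. -/
def dH {m : ℕ} (u v : Fin m → ℝ) : ℝ :=
  Real.log ((⨆ i, u i / v i) * (⨆ j, v j / u j))

/-- Birkhoff's ratio `γ(A) = max_{i,j,k,l} (A_{ik}A_{jl})/(A_{jk}A_{il})`. -/
def birkhoffGamma {n m : ℕ} (A : Matrix (Fin n) (Fin m) ℝ) : ℝ :=
  ⨆ p : (Fin n × Fin n) × Fin m × Fin m,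
    A p.1.1 p.2.1 * A p.1.2 p.2.2 / (A p.1.2 p.2.1 * A p.1.1 p.2.2)

/-- Birkhoff's contraction coefficient `λ(A) = (√γ(A) − 1)/(√γ(A) + 1)`. -/
def birkhoffLambda {n m : ℕ} (A : Matrix (Fin n) (Fin m) ℝ) : ℝ :=
  (Real.sqrt (birkhoffGamma A) - 1) / (Real.sqrt (birkhoffGamma A) + 1)

/-- The dual (Lagrangian) function for the sequentially composed OT problem with `M = 2`. -/
def dual2 {m1 m2 m3 : ℕ} (a : Fin m1 → ℝ) (b : Fin m3 → ℝ) (ε : ℝ)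
    (C1 : Matrix (Fin m1) (Fin m2) ℝ) (C2 : Matrix (Fin m2) (Fin m3) ℝ)
    (f1 : Fin m1 → ℝ) (f2 : Fin m2 → ℝ) (f3 : Fin m3 → ℝ) : ℝ :=
  (∑ j, f1 j * a j) + (∑ l, f3 l * b l)
    - ε * ((∑ j, ∑ k, Real.exp ((f1 j - f2 k - C1 j k) / ε))
      + ∑ k, ∑ l, Real.exp ((f2 k + f3 l - C2 k l) / ε))

/-- The matrix `diag(u) K diag(1/v)` induced by the first pair of Sinkhorn vectors. -/
def indMat1 {m1 m2 : ℕ} (u : Fin m1 → ℝ) (K : Matrix (Fin m1) (Fin m2) ℝ)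
    (v : Fin m2 → ℝ) : Matrix (Fin m1) (Fin m2) ℝ :=
  Matrix.diagonal u * K * Matrix.diagonal (fun k => (v k)⁻¹)

/-- The matrix `diag(v) K diag(w)` induced by the second pair of Sinkhorn vectors. -/
def indMat2 {m2 m3 : ℕ} (v : Fin m2 → ℝ) (K : Matrix (Fin m2) (Fin m3) ℝ)
    (w : Fin m3 → ℝ) : Matrix (Fin m2) (Fin m3) ℝ :=
  Matrix.diagonal v * K * Matrix.diagonal w

/-- **Characterization of the intermediate (half-step) matrices** (Prop. 4.3):
`P'^{n,1} := diag(u^{n,1})K¹diag(1/u^{n+1,2})` and `P'^{n,2} := diag(u^{n+1,2})K²diag(u^{n,3})`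
are consistent on the boundary, their edge marginals are `P^{n,1}r_n` and `(P^{n,2})ᵀ(1/r_n)`,
and their entries sum to at most `1`. -/
theorem sinkhorn_half_step_matrices
    {m1 m2 m3 : ℕ} (hm1 : 0 < m1) (hm2 : 0 < m2) (hm3 : 0 < m3)
    (C1 : Matrix (Fin m1) (Fin m2) ℝ) (C2 : Matrix (Fin m2) (Fin m3) ℝ)
    (hC1 : ∀ j k, 0 ≤ C1 j k) (hC2 : ∀ k l, 0 ≤ C2 k l)
    (a : Fin m1 → ℝ) (b : Fin m3 → ℝ)
    (ha : ∀ j, 0 < a j) (hb : ∀ l, 0 < b l)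
    (hasum : ∑ j, a j = 1) (hbsum : ∑ l, b l = 1)
    (ε : ℝ) (hε : 0 < ε)
    (K1 : Matrix (Fin m1) (Fin m2) ℝ) (K2 : Matrix (Fin m2) (Fin m3) ℝ)
    (hK1 : ∀ j k, K1 j k = Real.exp (-C1 j k / ε))
    (hK2 : ∀ k l, K2 k l = Real.exp (-C2 k l / ε))
    (u1 : ℕ → Fin m1 → ℝ) (u2 : ℕ → Fin m2 → ℝ) (u3 : ℕ → Fin m3 → ℝ)
    (hinit1 : u1 0 = fun _ => 1 / (∑ j, ∑ k, K1 j k))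
    (hinit2 : u2 0 = fun _ => 1)
    (hinit3 : u3 0 = fun _ => 1 / (∑ k, ∑ l, K2 k l))
    (hrec2 : ∀ n, u2 (n+1) = fun k => Real.sqrt ((K1ᵀ *ᵥ u1 n) k / (K2 *ᵥ u3 n) k))
    (hrec1 : ∀ n, u1 (n+1) = fun j => a j / (K1 *ᵥ fun k => (u2 (n+1) k)⁻¹) j)
    (hrec3 : ∀ n, u3 (n+1) = fun l => b l / (K2ᵀ *ᵥ u2 (n+1)) l)
    (r : ℕ → Fin m2 → ℝ)
    (hr : ∀ n, r n = fun k => Real.sqrt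
      (((indMat2 (u2 n) K2 (u3 n)) *ᵥ fun _ => 1) k /
        (((indMat1 (u1 n) K1 (u2 n))ᵀ *ᵥ fun _ => 1) k)))
    (P'1 : ℕ → Matrix (Fin m1) (Fin m2) ℝ) (P'2 : ℕ → Matrix (Fin m2) (Fin m3) ℝ)
    (hP'1 : ∀ n, P'1 n = Matrix.diagonal (u1 n) * K1 * Matrix.diagonal (fun k => (u2 (n+1) k)⁻¹))
    (hP'2 : ∀ n, P'2 n = Matrix.diagonal (u2 (n+1)) * K2 * Matrix.diagonal (u3 n)) :
    ∀ n : ℕ,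
      ((P'1 n)ᵀ *ᵥ fun _ => 1) = (P'2 n *ᵥ fun _ => 1) ∧
      (P'1 n *ᵥ fun _ => 1) = (indMat1 (u1 n) K1 (u2 n) *ᵥ r n) ∧
      ((P'2 n)ᵀ *ᵥ fun _ => 1) = ((indMat2 (u2 n) K2 (u3 n))ᵀ *ᵥ fun k => (r n k)⁻¹) ∧
      (∑ j, ∑ k, P'1 n j k) ≤ 1 ∧ (∑ k, ∑ l, P'2 n k l) ≤ 1 := by
  have hne1 : Nonempty (Fin m1) := ⟨⟨0, hm1⟩⟩
  have hne2 : Nonempty (Fin m2) := ⟨⟨0, hm2⟩⟩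
  have hne3 : Nonempty (Fin m3) := ⟨⟨0, hm3⟩⟩
  have hK1pos : ∀ j k, 0 < K1 j k := fun j k => by rw [hK1]; exact Real.exp_pos _
  have hK2pos : ∀ k l, 0 < K2 k l := fun k l => by rw [hK2]; exact Real.exp_pos _
  -- positivity of all Sinkhorn vectors
  have hupos : ∀ n, (∀ j, 0 < u1 n j) ∧ (∀ k, 0 < u2 n k) ∧ (∀ l, 0 < u3 n l) := by
    intro n
    induction n with
    | zero =>
      refine ⟨fun j => ?_, fun k => by rw [hinit2]; norm_num, fun l => ?_⟩
      · rw [hinit1]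
        exact div_pos one_pos (Finset.sum_pos (fun j _ =>
          Finset.sum_pos (fun k _ => hK1pos j k) Finset.univ_nonempty) Finset.univ_nonempty)
      · rw [hinit3]
        exact div_pos one_pos (Finset.sum_pos (fun k _ =>
          Finset.sum_pos (fun l _ => hK2pos k l) Finset.univ_nonempty) Finset.univ_nonempty)
    | succ n ih =>
      obtain ⟨h1, h2, h3⟩ := ih
      have hA : ∀ k, 0 < (K1ᵀ *ᵥ u1 n) k := fun k => by
        simp only [Matrix.mulVec, dotProduct, Matrix.transpose_apply]
        exact Finset.sum_pos (fun j _ => mul_pos (hK1pos j k) (h1 j)) Finset.univ_nonempty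
      have hB : ∀ k, 0 < (K2 *ᵥ u3 n) k := fun k => by
        simp only [Matrix.mulVec, dotProduct]
        exact Finset.sum_pos (fun l _ => mul_pos (hK2pos k l) (h3 l)) Finset.univ_nonempty
      have h2' : ∀ k, 0 < u2 (n+1) k := fun k => by
        rw [hrec2]
        exact Real.sqrt_pos.2 (div_pos (hA k) (hB k))
      refine ⟨fun j => ?_, h2', fun l => ?_⟩
      · rw [hrec1]
        refine div_pos (ha j) ?_
        simp only [Matrix.mulVec, dotProduct]
        exact Finset.sum_pos (fun k _ =>
          mul_pos (hK1pos j k) (inv_pos.2 (h2' k))) Finset.univ_nonempty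
      · rw [hrec3]
        refine div_pos (hb l) ?_
        simp only [Matrix.mulVec, dotProduct, Matrix.transpose_apply]
        exact Finset.sum_pos (fun k _ => mul_pos (hK2pos k l) (h2' k)) Finset.univ_nonempty
  intro n
  obtain ⟨h1, h2, h3⟩ := hupos n
  obtain ⟨h1', h2', h3'⟩ := hupos (n+1)
  -- the key column quantities
  set A : Fin m2 → ℝ := fun k => ∑ j, K1 j k * u1 n j with hAdef
  set B : Fin m2 → ℝ := fun k => ∑ l, K2 k l * u3 n l with hBdef
  have hApos : ∀ k, 0 < A k := fun k =>
    Finset.sum_pos (fun j _ => mul_pos (hK1pos j k) (h1 j)) Finset.univ_nonempty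
  have hBpos : ∀ k, 0 < B k := fun k =>
    Finset.sum_pos (fun l _ => mul_pos (hK2pos k l) (h3 l)) Finset.univ_nonempty
  have hu2 : ∀ k, u2 (n+1) k = Real.sqrt (A k / B k) := fun k => by
    rw [hrec2]
    simp only [Matrix.mulVec, dotProduct, Matrix.transpose_apply, hAdef, hBdef]
  -- key identities for the half-step column sums
  have key1 : ∀ k, A k / u2 (n+1) k = Real.sqrt (A k * B k) := fun k => by
    have hsA : (0:ℝ) < Real.sqrt (A k) := Real.sqrt_pos.2 (hApos k)
    have hsB : (0:ℝ) < Real.sqrt (B k) := Real.sqrt_pos.2 (hBpos k)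
    rw [hu2 k, Real.sqrt_div (hApos k).le, Real.sqrt_mul (hApos k).le,
      ← Real.mul_self_sqrt (hApos k).le]
    field_simp
    rw [Real.sqrt_sq hsA.le]
  have key2 : ∀ k, u2 (n+1) k * B k = Real.sqrt (A k * B k) := fun k => by
    have hsA : (0:ℝ) < Real.sqrt (A k) := Real.sqrt_pos.2 (hApos k)
    have hsB : (0:ℝ) < Real.sqrt (B k) := Real.sqrt_pos.2 (hBpos k)
    rw [hu2 k, Real.sqrt_div (hApos k).le, Real.sqrt_mul (hApos k).le,
      ← Real.mul_self_sqrt (hBpos k).le]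
    field_simp
    rw [Real.sqrt_sq hsB.le]
  -- entrywise descriptions
  have hP'1e : ∀ j k, P'1 n j k = u1 n j * K1 j k * (u2 (n+1) k)⁻¹ := fun j k => by
    rw [hP'1]; simp [Matrix.mul_diagonal, Matrix.diagonal_mul]
  have hP'2e : ∀ k l, P'2 n k l = u2 (n+1) k * K2 k l * u3 n l := fun k l => by
    rw [hP'2]; simp [Matrix.mul_diagonal, Matrix.diagonal_mul]
  have hI1e : ∀ j k, indMat1 (u1 n) K1 (u2 n) j k = u1 n j * K1 j k * (u2 n k)⁻¹ := fun j k => by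
    simp [indMat1, Matrix.mul_diagonal, Matrix.diagonal_mul]
  have hI2e : ∀ k l, indMat2 (u2 n) K2 (u3 n) k l = u2 n k * K2 k l * u3 n l := fun k l => by
    simp [indMat2, Matrix.mul_diagonal, Matrix.diagonal_mul]
  -- r n k = u2 n k / u2 (n+1) k
  have hrk : ∀ k, r n k = u2 n k / u2 (n+1) k := fun k => by
    have e1 : ((indMat2 (u2 n) K2 (u3 n)) *ᵥ fun _ => 1) k = u2 n k * B k := by
      simp only [Matrix.mulVec, dotProduct, hI2e, mul_one, hBdef, Finset.mul_sum]
      exact Finset.sum_congr rfl fun l _ => by ring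
    have e2 : (((indMat1 (u1 n) K1 (u2 n))ᵀ *ᵥ fun _ => 1)) k = A k * (u2 n k)⁻¹ := by
      simp only [Matrix.mulVec, dotProduct, Matrix.transpose_apply, hI1e, mul_one,
        hAdef, Finset.sum_mul]
      exact Finset.sum_congr rfl fun j _ => by ring
    rw [hr]
    simp only [e1, e2]
    have harg : u2 n k * B k / (A k * (u2 n k)⁻¹) = (u2 n k)^2 * (B k / A k) := by
      field_simp [(h2 k).ne', (hApos k).ne']
    rw [harg, Real.sqrt_mul (sq_nonneg _), Real.sqrt_sq (h2 k).le, hu2 k]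
    have hsA : (0:ℝ) < Real.sqrt (A k) := Real.sqrt_pos.2 (hApos k)
    have hsB : (0:ℝ) < Real.sqrt (B k) := Real.sqrt_pos.2 (hBpos k)
    rw [Real.sqrt_div (hBpos k).le, Real.sqrt_div (hApos k).le]
    field_simp
  -- unit-mass identities for the full-step matrices
  have mass1 : ∑ k, A k * (u2 n k)⁻¹ = 1 := by
    have swap : ∑ k, A k * (u2 n k)⁻¹ = ∑ j, u1 n j * ∑ k, K1 j k * (u2 n k)⁻¹ := by
      simp only [hAdef, Finset.sum_mul]
      rw [Finset.sum_comm]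
      refine Finset.sum_congr rfl fun j _ => ?_
      rw [Finset.mul_sum]
      exact Finset.sum_congr rfl fun k _ => by ring
    rw [swap]
    cases n with
    | zero =>
      have hS : (0:ℝ) < ∑ j, ∑ k, K1 j k := Finset.sum_pos (fun j _ =>
        Finset.sum_pos (fun k _ => hK1pos j k) Finset.univ_nonempty) Finset.univ_nonempty
      rw [hinit1, hinit2]
      simp only [inv_one, mul_one]
      rw [← Finset.mul_sum, one_div, inv_mul_cancel₀ hS.ne']
    | succ m =>
      rw [← hasum]
      refine Finset.sum_congr rfl fun j _ => ?_
      have hD : (K1 *ᵥ fun k => (u2 (m+1) k)⁻¹) j = ∑ k, K1 j k * (u2 (m+1) k)⁻¹ := by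
        simp [Matrix.mulVec, dotProduct]
      have hDpos : 0 < ∑ k, K1 j k * (u2 (m+1) k)⁻¹ :=
        Finset.sum_pos (fun k _ => mul_pos (hK1pos j k) (inv_pos.2 (h2 k)))
          Finset.univ_nonempty
      rw [hrec1 m]
      simp only [hD]
      exact div_mul_cancel₀ _ hDpos.ne'
  have mass2 : ∑ k, u2 n k * B k = 1 := by
    have swap : ∑ k, u2 n k * B k = ∑ l, u3 n l * ∑ k, K2 k l * u2 n k := by
      simp only [hBdef, Finset.mul_sum]
      rw [Finset.sum_comm]
      exact Finset.sum_congr rfl fun l _ => Finset.sum_congr rfl fun k _ => by ring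
    rw [swap]
    cases n with
    | zero =>
      have hS : (0:ℝ) < ∑ k, ∑ l, K2 k l := Finset.sum_pos (fun k _ =>
        Finset.sum_pos (fun l _ => hK2pos k l) Finset.univ_nonempty) Finset.univ_nonempty
      rw [hinit2, hinit3]
      simp only [mul_one]
      have hswap : ∑ l, ∑ k, K2 k l = ∑ k, ∑ l, K2 k l := Finset.sum_comm
      rw [← Finset.mul_sum, hswap, one_div, inv_mul_cancel₀ hS.ne']
    | succ m =>
      rw [← hbsum]
      refine Finset.sum_congr rfl fun l _ => ?_
      have hD : (K2ᵀ *ᵥ u2 (m+1)) l = ∑ k, K2 k l * u2 (m+1) k := by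
        simp [Matrix.mulVec, dotProduct, Matrix.transpose_apply]
      have hDpos : 0 < ∑ k, K2 k l * u2 (m+1) k :=
        Finset.sum_pos (fun k _ => mul_pos (hK2pos k l) (h2 k)) Finset.univ_nonempty
      rw [hrec3 m]
      simp only [hD]
      exact div_mul_cancel₀ _ hDpos.ne'
  -- Cauchy–Schwarz bound on the common mass of the half-step matrices
  have hCS : ∑ k, Real.sqrt (A k * B k) ≤ 1 := by
    have e : ∀ k, Real.sqrt (A k * B k)
        = Real.sqrt (A k * (u2 n k)⁻¹) * Real.sqrt (u2 n k * B k) := fun k => by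
      rw [← Real.sqrt_mul (mul_nonneg (hApos k).le (inv_nonneg.2 (h2 k).le))]
      congr 1
      field_simp [(h2 k).ne']
    calc ∑ k, Real.sqrt (A k * B k)
        = ∑ k, Real.sqrt (A k * (u2 n k)⁻¹) * Real.sqrt (u2 n k * B k) :=
          Finset.sum_congr rfl fun k _ => e k
      _ ≤ Real.sqrt (∑ k, A k * (u2 n k)⁻¹) * Real.sqrt (∑ k, u2 n k * B k) :=
          Real.sum_sqrt_mul_sqrt_le _
            (fun k => mul_nonneg (hApos k).le (inv_nonneg.2 (h2 k).le))
            (fun k => mul_nonneg (h2 k).le (hBpos k).le)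
      _ = 1 := by rw [mass1, mass2]; simp
  refine ⟨?_, ?_, ?_, ?_, ?_⟩
  -- (i)
  · funext k
    have L : ((P'1 n)ᵀ *ᵥ fun _ => 1) k = A k / u2 (n+1) k := by
      simp only [Matrix.mulVec, dotProduct, Matrix.transpose_apply, hP'1e, mul_one,
        hAdef, div_eq_mul_inv, Finset.sum_mul]
      exact Finset.sum_congr rfl fun j _ => by ring
    have R : (P'2 n *ᵥ fun _ => 1) k = u2 (n+1) k * B k := by
      simp only [Matrix.mulVec, dotProduct, hP'2e, mul_one, hBdef, Finset.mul_sum]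
      exact Finset.sum_congr rfl fun l _ => by ring
    rw [L, R, key1, key2]
  -- (ii) first
  · funext j
    simp only [Matrix.mulVec, dotProduct, hP'1e, hI1e, mul_one]
    refine Finset.sum_congr rfl fun k _ => ?_
    rw [hrk k]
    field_simp [(h2 k).ne', (h2' k).ne']
  -- (ii) second
  · funext l
    simp only [Matrix.mulVec, dotProduct, Matrix.transpose_apply, hP'2e, hI2e, mul_one]
    refine Finset.sum_congr rfl fun k _ => ?_
    rw [hrk k]
    have hk : u2 n k ≠ 0 := (h2 k).ne'
    have hk' : u2 (n+1) k ≠ 0 := (h2' k).ne'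
    field_simp
  -- (iii) mass of P'1
  · have swap : ∑ j, ∑ k, P'1 n j k = ∑ k, A k / u2 (n+1) k := by
      simp only [hP'1e, hAdef, div_eq_mul_inv, Finset.sum_mul]
      rw [Finset.sum_comm]
      exact Finset.sum_congr rfl fun k _ => Finset.sum_congr rfl fun j _ => by ring
    calc ∑ j, ∑ k, P'1 n j k = ∑ k, Real.sqrt (A k * B k) := by
          rw [swap]; exact Finset.sum_congr rfl fun k _ => key1 k
      _ ≤ 1 := hCS
  -- (iii) mass of P'2
  · have swap : ∑ k, ∑ l, P'2 n k l = ∑ k, u2 (n+1) k * B k := by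
      simp only [hP'2e, hBdef, Finset.mul_sum]
      exact Finset.sum_congr rfl fun k _ => Finset.sum_congr rfl fun l _ => by ring
    calc ∑ k, ∑ l, P'2 n k l = ∑ k, Real.sqrt (A k * B k) := by
          rw [swap]; exact Finset.sum_congr rfl fun k _ => key2 k
      _ ≤ 1 := hCS
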